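/- arXiv:1208.1155 — 3 statements merged into one kernel-verified Lean document; each statement's English description precedes it below -/
import Mathlib

section
/- Let m ≥ 1 and let S ∈ M_{2m}(ℂ) be of quaternion type, i.e. S = [[Z, W],[-W̄, Z̄]] for some Z, W ∈ M_m(ℂ). Then det S is a real number, and det S ≥ 0. -/
open Matrix Polynomial

namespace Stmt17

variable {m : ℕ}

/-- entrywise conjugation -/
noncomputable def cj {n : Type*} (M : Matrix n n ℂ) : Matrix n n ℂ :=
  M.map (starRingEnd ℂ)

lemma cj_apply {n : Type*} (M : Matrix n n ℂ) (i j : n) : cj M i j = starRingEnd ℂ (M i j) := rfl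

lemma cj_cj {n : Type*} (M : Matrix n n ℂ) : cj (cj M) = M := by
  ext i j; simp [cj_apply]

lemma cj_mul {n : Type*} [Fintype n] (M N : Matrix n n ℂ) : cj (M * N) = cj M * cj N := by
  ext i j; simp [cj_apply, Matrix.mul_apply, map_sum]

lemma cj_add {n : Type*} (M N : Matrix n n ℂ) : cj (M + N) = cj M + cj N := by
  ext i j; simp [cj_apply]

lemma cj_neg {n : Type*} (M : Matrix n n ℂ) : cj (-M) = -cj M := by
  ext i j; simp [cj_apply]

lemma cj_sub {n : Type*} (M N : Matrix n n ℂ) : cj (M - N) = cj M - cj N := by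
  ext i j; simp [cj_apply]

lemma cj_one {n : Type*} [DecidableEq n] : cj (1 : Matrix n n ℂ) = 1 := by
  ext i j; by_cases h : i = j <;> simp [cj_apply, Matrix.one_apply, h]

lemma cj_zero {n : Type*} : cj (0 : Matrix n n ℂ) = 0 := by
  ext i j; simp [cj_apply]

lemma cj_smul {n : Type*} (r : ℝ) (M : Matrix n n ℂ) : cj ((r : ℂ) • M) = (r : ℂ) • cj M := by
  ext i j; simp [cj_apply]

lemma cj_conjTranspose {n : Type*} (M : Matrix n n ℂ) : cj (Mᴴ) = Mᵀ := by
  ext i j; simp [cj_apply]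

lemma conjTranspose_eq_cj_transpose {n : Type*} (M : Matrix n n ℂ) : Mᴴ = (cj M)ᵀ := by
  ext i j; simp [cj_apply]

lemma det_cj {n : Type*} [Fintype n] [DecidableEq n] (M : Matrix n n ℂ) :
    (cj M).det = starRingEnd ℂ M.det := by
  rw [RingHom.map_det]; rfl

lemma trace_cj {n : Type*} [Fintype n] (M : Matrix n n ℂ) :
    (cj M).trace = starRingEnd ℂ M.trace := by
  simp [Matrix.trace, cj_apply, Matrix.diag, map_sum]

/-- the conjugation structure matrix -/
noncomputable def Jq (m : ℕ) : Matrix (Fin m ⊕ Fin m) (Fin m ⊕ Fin m) ℂ :=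
  fromBlocks 0 1 (-1) 0

lemma Jq_mul_Jq : Jq m * Jq m = -1 := by
  unfold Jq
  rw [fromBlocks_multiply]
  ext (i|i) (j|j) <;> by_cases h : i = j <;>
    simp [Matrix.one_apply, Matrix.neg_apply, h]

lemma cj_Jq : cj (Jq m) = Jq m := by
  ext (i|i) (j|j) <;> by_cases h : i = j <;>
    simp [cj_apply, Jq, Matrix.one_apply, Matrix.neg_apply, h]

lemma Jq_transpose : (Jq m)ᵀ = -Jq m := by
  ext (i|i) (j|j) <;> by_cases h : i = j <;>
    simp [Jq, Matrix.transpose_apply, Matrix.one_apply, Matrix.neg_apply, h]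
  · exact fun hji => absurd hji.symm h
  · exact fun hji => absurd hji.symm h

lemma Jq_conjTranspose : (Jq m)ᴴ = -Jq m := by
  rw [conjTranspose_eq_cj_transpose, cj_Jq, Jq_transpose]

lemma Jq_hermit_mul : (Jq m)ᴴ * Jq m = 1 := by
  rw [Jq_conjTranspose, Matrix.neg_mul, Jq_mul_Jq, neg_neg]

lemma Jq_mul_hermit : Jq m * (Jq m)ᴴ = 1 := by
  rw [Jq_conjTranspose, Matrix.mul_neg, Jq_mul_Jq, neg_neg]

/-- quaternion-type predicate -/
def QT (M : Matrix (Fin m ⊕ Fin m) (Fin m ⊕ Fin m) ℂ) : Prop :=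
  Jq m * M = cj M * Jq m

lemma QT.one : QT (1 : Matrix (Fin m ⊕ Fin m) (Fin m ⊕ Fin m) ℂ) := by
  simp [QT, cj_one]

lemma QT.zero : QT (0 : Matrix (Fin m ⊕ Fin m) (Fin m ⊕ Fin m) ℂ) := by
  simp [QT, cj_zero]

lemma QT.mul {M N : Matrix (Fin m ⊕ Fin m) (Fin m ⊕ Fin m) ℂ} (hM : QT M) (hN : QT N) :
    QT (M * N) := by
  unfold QT at *
  rw [cj_mul, ← Matrix.mul_assoc, hM, Matrix.mul_assoc, hN, Matrix.mul_assoc]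

lemma QT.add {M N : Matrix (Fin m ⊕ Fin m) (Fin m ⊕ Fin m) ℂ} (hM : QT M) (hN : QT N) :
    QT (M + N) := by
  unfold QT at *
  rw [cj_add, Matrix.mul_add, Matrix.add_mul, hM, hN]

lemma QT.neg {M : Matrix (Fin m ⊕ Fin m) (Fin m ⊕ Fin m) ℂ} (hM : QT M) : QT (-M) := by
  unfold QT at *
  rw [cj_neg, Matrix.mul_neg, Matrix.neg_mul, hM]

lemma QT.sub {M N : Matrix (Fin m ⊕ Fin m) (Fin m ⊕ Fin m) ℂ} (hM : QT M) (hN : QT N) :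
    QT (M - N) := by
  rw [sub_eq_add_neg]; exact hM.add hN.neg

lemma QT.smul {M : Matrix (Fin m ⊕ Fin m) (Fin m ⊕ Fin m) ℂ} (r : ℝ) (hM : QT M) :
    QT ((r : ℂ) • M) := by
  unfold QT at *
  rw [cj_smul, Matrix.mul_smul, Matrix.smul_mul, hM]

lemma QT.cj_eq {M : Matrix (Fin m ⊕ Fin m) (Fin m ⊕ Fin m) ℂ} (hM : QT M) :
    cj M = Jq m * M * (Jq m)ᴴ := by
  calc cj M = cj M * (Jq m * (Jq m)ᴴ) := by rw [Jq_mul_hermit, Matrix.mul_one]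
    _ = (cj M * Jq m) * (Jq m)ᴴ := by rw [Matrix.mul_assoc]
    _ = Jq m * M * (Jq m)ᴴ := by rw [← hM]

lemma QT.conjTranspose {M : Matrix (Fin m ⊕ Fin m) (Fin m ⊕ Fin m) ℂ} (hM : QT M) : QT (Mᴴ) := by
  unfold QT at *
  have h := congrArg Matrix.transpose hM
  rw [Matrix.transpose_mul, Matrix.transpose_mul, Jq_transpose] at h
  rw [cj_conjTranspose]
  rw [← conjTranspose_eq_cj_transpose] at h
  rw [Matrix.mul_neg, Matrix.neg_mul] at h
  exact (neg_injective h).symm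

lemma QT.inv {M : Matrix (Fin m ⊕ Fin m) (Fin m ⊕ Fin m) ℂ} (hM : QT M) (h : IsUnit M.det) :
    QT (M⁻¹) := by
  have hcjinv : cj (M⁻¹) = (cj M)⁻¹ := by
    refine (Matrix.inv_eq_right_inv ?_).symm
    rw [← cj_mul, Matrix.mul_nonsing_inv _ h, cj_one]
  unfold QT at *
  rw [hcjinv]
  have hcjdet : IsUnit (cj M).det := by
    rw [det_cj]; exact h.map (starRingEnd ℂ)
  have key : cj M * (Jq m * M⁻¹) = cj M * ((cj M)⁻¹ * Jq m) := by
    rw [← Matrix.mul_assoc, ← hM, ← Matrix.mul_assoc, Matrix.mul_nonsing_inv _ hcjdet,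
      Matrix.mul_assoc, Matrix.mul_nonsing_inv _ h, Matrix.mul_one, Matrix.one_mul]
  calc Jq m * M⁻¹ = ((cj M)⁻¹ * cj M) * (Jq m * M⁻¹) := by
        rw [Matrix.nonsing_inv_mul _ hcjdet, Matrix.one_mul]
    _ = (cj M)⁻¹ * (cj M * ((cj M)⁻¹ * Jq m)) := by rw [Matrix.mul_assoc, key]
    _ = ((cj M)⁻¹ * cj M) * ((cj M)⁻¹ * Jq m) := by rw [Matrix.mul_assoc]
    _ = (cj M)⁻¹ * Jq m := by rw [Matrix.nonsing_inv_mul _ hcjdet, Matrix.one_mul]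

lemma isUnit_det_Jq : IsUnit (Jq m).det := by
  have : (Jq m).det * (Jq m).det = 1 := by
    rw [← Matrix.det_mul, Jq_mul_Jq]
    have : ((-1 : Matrix (Fin m ⊕ Fin m) (Fin m ⊕ Fin m) ℂ)) = (-1 : ℂ) • 1 := by simp
    rw [this, Matrix.det_smul, Matrix.det_one, Fintype.card_sum, Fintype.card_fin]
    rw [mul_one]
    exact Even.neg_one_pow ⟨m, rfl⟩
  exact IsUnit.of_mul_eq_one _ this

lemma QT.det_real {M : Matrix (Fin m ⊕ Fin m) (Fin m ⊕ Fin m) ℂ} (hM : QT M) :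
    starRingEnd ℂ M.det = M.det := by
  have h := congrArg Matrix.det hM
  rw [Matrix.det_mul, Matrix.det_mul, det_cj, mul_comm ((starRingEnd ℂ) M.det)] at h
  exact (mul_left_cancel₀ (isUnit_det_Jq (m := m)).ne_zero h).symm

lemma QT.det_im {M : Matrix (Fin m ⊕ Fin m) (Fin m ⊕ Fin m) ℂ} (hM : QT M) :
    (M.det).im = 0 := by
  have h := congrArg Complex.im hM.det_real
  simp only [Complex.conj_im] at h
  linarith

lemma QT.trace_im {M : Matrix (Fin m ⊕ Fin m) (Fin m ⊕ Fin m) ℂ} (hM : QT M) :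
    (M.trace).im = 0 := by
  have h : (cj M).trace = M.trace := by
    rw [hM.cj_eq, Matrix.trace_mul_cycle, Jq_hermit_mul, Matrix.one_mul]
  rw [trace_cj] at h
  have := congrArg Complex.im h
  simp only [Complex.conj_im] at this
  linarith

lemma QT.mul_Jq_comm {M : Matrix (Fin m ⊕ Fin m) (Fin m ⊕ Fin m) ℂ} (hM : QT M) :
    M * Jq m = Jq m * cj M := by
  rw [hM.cj_eq, ← Matrix.mul_assoc, ← Matrix.mul_assoc, Jq_mul_Jq, Jq_conjTranspose]
  rw [Matrix.mul_neg, Matrix.neg_mul, Matrix.neg_mul, neg_neg, Matrix.one_mul]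

lemma QT.even_finrank_ker {T : Matrix (Fin m ⊕ Fin m) (Fin m ⊕ Fin m) ℂ} (hT : QT T) :
    Even (Module.finrank ℂ (LinearMap.ker T.mulVecLin)) := by
  classical
  set K := LinearMap.ker T.mulVecLin with hK
  let cv : (Fin m ⊕ Fin m → ℂ) → (Fin m ⊕ Fin m → ℂ) := fun v i => starRingEnd ℂ (v i)
  have hcvcv : ∀ v, cv (cv v) = v := by intro v; funext i; simp [cv]
  have hcv0 : cv 0 = 0 := by funext i; simp [cv]
  have hcvadd : ∀ u v, cv (u + v) = cv u + cv v := by intro u v; funext i; simp [cv]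
  have hcvsmul : ∀ (c : ℂ) v, cv (c • v) = starRingEnd ℂ c • cv v := by
    intro c v; funext i; simp [cv]
  let σ : (Fin m ⊕ Fin m → ℂ) → (Fin m ⊕ Fin m → ℂ) := fun v => (Jq m).mulVec (cv v)
  have hcjmulVec : ∀ (A : Matrix (Fin m ⊕ Fin m) (Fin m ⊕ Fin m) ℂ) v,
      (cj A).mulVec (cv v) = cv (A.mulVec v) := by
    intro A v; funext i
    simp [Matrix.mulVec, dotProduct, cj_apply, cv, map_sum]
  have hσmem : ∀ v ∈ K, σ v ∈ K := by
    intro v hv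
    rw [hK, LinearMap.mem_ker, Matrix.mulVecLin_apply] at *
    show T.mulVec ((Jq m).mulVec (cv v)) = 0
    rw [Matrix.mulVec_mulVec, hT.mul_Jq_comm, ← Matrix.mulVec_mulVec, hcjmulVec, hv, hcv0,
      Matrix.mulVec_zero]
  have hσσ : ∀ v, σ (σ v) = -v := by
    intro v
    show (Jq m).mulVec (cv ((Jq m).mulVec (cv v))) = -v
    rw [← hcjmulVec, cj_Jq, hcvcv, Matrix.mulVec_mulVec, Jq_mul_Jq, Matrix.neg_mulVec,
      Matrix.one_mulVec]
  have hσadd : ∀ u v, σ (u + v) = σ u + σ v := by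
    intro u v
    show (Jq m).mulVec (cv (u + v)) = _
    rw [hcvadd, Matrix.mulVec_add]
  have hσsmul : ∀ (c : ℂ) v, σ (c • v) = starRingEnd ℂ c • σ v := by
    intro c v
    show (Jq m).mulVec (cv (c • v)) = _
    rw [hcvsmul, Matrix.mulVec_smul]
  -- real-linear version to push through sums
  let σR : (Fin m ⊕ Fin m → ℂ) →ₗ[ℝ] (Fin m ⊕ Fin m → ℂ) :=
    { toFun := σ
      map_add' := hσadd
      map_smul' := by
        intro r v
        show σ (r • v) = r • σ v
        have h1 : (r : ℝ) • v = ((r : ℂ)) • v := by funext i; simp [Complex.real_smul]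
        have h2 : (r : ℝ) • σ v = ((r : ℂ)) • σ v := by funext i; simp [Complex.real_smul]
        rw [h1, h2, hσsmul, Complex.conj_ofReal] }
  set d := Module.finrank ℂ K with hd
  let β : Module.Basis (Fin d) ℂ K := Module.finBasis ℂ K
  let σK : K → K := fun u => ⟨σ u.1, hσmem u.1 u.2⟩
  let M : Matrix (Fin d) (Fin d) ℂ := fun i j => β.repr (σK (β j)) i
  have key : ∀ u : K, σK u = ∑ j : Fin d, (starRingEnd ℂ (β.repr u j)) • σK (β j) := by
    intro u
    apply Subtype.ext
    have hu : (u : Fin m ⊕ Fin m → ℂ) = ∑ j : Fin d, β.repr u j • (β j : Fin m ⊕ Fin m → ℂ) := by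
      conv_lhs => rw [← β.sum_repr u]
      push_cast
      rfl
    show σ u.1 = _
    rw [hu]
    rw [show σ (∑ j : Fin d, β.repr u j • (β j : Fin m ⊕ Fin m → ℂ))
        = ∑ j : Fin d, σ (β.repr u j • (β j : Fin m ⊕ Fin m → ℂ)) from map_sum σR _ _]
    push_cast
    exact Finset.sum_congr rfl fun j _ => hσsmul _ _
  have hrepr : ∀ (u : K) (i : Fin d),
      β.repr (σK u) i = ∑ j : Fin d, starRingEnd ℂ (β.repr u j) * M i j := by
    intro u i
    rw [key u, map_sum]
    simp [M, Finsupp.smul_apply]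
  have hMcjM : M * cj M = -1 := by
    ext i j
    have h1 : σK (σK (β j)) = -(β j) := by
      apply Subtype.ext
      show σ (σ (β j).1) = -(β j).1
      exact hσσ _
    have h2 := hrepr (σK (β j)) i
    rw [h1] at h2
    have h3 : (β.repr (-(β j))) i = -((1 : Matrix (Fin d) (Fin d) ℂ) i j) := by
      rw [map_neg, β.repr_self]
      by_cases h : i = j <;> simp [Finsupp.single_apply, Matrix.one_apply, h, eq_comm]
    rw [h3] at h2
    have h4 : ∑ k : Fin d, starRingEnd ℂ (β.repr (σK (β j)) k) * M i k
        = (M * cj M) i j := by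
      rw [Matrix.mul_apply]
      apply Finset.sum_congr rfl
      intro k _
      rw [cj_apply]
      show starRingEnd ℂ (M k j) * M i k = M i k * starRingEnd ℂ (M k j)
      ring
    rw [h4] at h2
    rw [← h2, Matrix.neg_apply]
  have hdet : M.det * starRingEnd ℂ M.det = (-1 : ℂ) ^ d := by
    rw [← det_cj, ← Matrix.det_mul, hMcjM]
    have : ((-1 : Matrix (Fin d) (Fin d) ℂ)) = (-1 : ℂ) • 1 := by simp
    rw [this, Matrix.det_smul, Matrix.det_one, Fintype.card_fin, mul_one]
  rcases Nat.even_or_odd d with he | ho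
  · exact he
  · exfalso
    rw [Odd.neg_one_pow ho] at hdet
    rw [mul_comm, Complex.conj_mul'] at hdet
    have h8 : (‖M.det‖ ^ 2 : ℝ) = -1 := by
      have h7 := hdet
      rw [show (-1 : ℂ) = ((-1 : ℝ) : ℂ) by norm_num] at h7
      exact_mod_cast h7
    nlinarith [sq_nonneg ‖M.det‖]


open scoped ComplexOrder


lemma fiber_det {k : Type*} [Fintype k] [DecidableEq k] (A : Matrix k k ℂ) (c : ℝ)
    (h1 : Aᴴ = ((2 * c : ℝ) : ℂ) • (1 : Matrix k k ℂ) - A)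
    (h2 : A * A - ((2 * c : ℝ) : ℂ) • A + 1 = 0)
    (h3 : A.trace.im = 0)
    (h4 : Even (Fintype.card k)) :
    A.det = 1 := by
  classical
  by_cases hk : IsEmpty k
  · simp [Matrix.det_isEmpty]
  rw [not_isEmpty_iff] at hk
  set K := A - ((c : ℝ) : ℂ) • (1 : Matrix k k ℂ) with hKdef
  have hKh : Kᴴ = -K := by
    rw [hKdef, Matrix.conjTranspose_sub, h1, Matrix.conjTranspose_smul, Matrix.conjTranspose_one]
    rw [show star ((c : ℝ) : ℂ) = ((c : ℝ) : ℂ) by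
      rw [Complex.star_def, Complex.conj_ofReal]]
    push_cast
    module
  have hAA : A * A = ((2 * c : ℝ) : ℂ) • A - 1 := by
    have := h2
    linear_combination (norm := module) this
  have hKK : K * K = ((c ^ 2 - 1 : ℝ) : ℂ) • (1 : Matrix k k ℂ) := by
    have expand : K * K = A * A - ((c : ℝ) : ℂ) • A - ((c : ℝ) : ℂ) • A
        + (((c : ℝ) : ℂ) * ((c : ℝ) : ℂ)) • (1 : Matrix k k ℂ) := by
      rw [hKdef]
      simp only [Matrix.sub_mul, Matrix.mul_sub, Matrix.smul_mul, Matrix.mul_smul,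
        Matrix.one_mul, Matrix.mul_one, smul_sub, smul_smul]
      module
    rw [expand, hAA]
    push_cast
    module
  have hKhK : Kᴴ * K = ((1 - c ^ 2 : ℝ) : ℂ) • (1 : Matrix k k ℂ) := by
    rw [hKh, Matrix.neg_mul, hKK]
    push_cast
    module
  -- nonnegativity of 1 - c^2
  have hpsd : (0 : ℝ) ≤ 1 - c ^ 2 := by
    obtain ⟨i⟩ := hk
    have e1 : (Kᴴ * K) i i = ((1 - c ^ 2 : ℝ) : ℂ) := by
      rw [hKhK, Matrix.smul_apply, Matrix.one_apply_eq, smul_eq_mul, mul_one]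
    have e2 : (Kᴴ * K) i i = ∑ j, ((Complex.normSq (K j i) : ℝ) : ℂ) := by
      rw [Matrix.mul_apply]
      apply Finset.sum_congr rfl
      intro j _
      rw [Matrix.conjTranspose_apply, Complex.star_def, mul_comm, Complex.mul_conj]
    rw [e1] at e2
    have e3 : (1 - c ^ 2 : ℝ) = ∑ j, Complex.normSq (K j i) := by
      exact_mod_cast e2
    rw [e3]
    exact Finset.sum_nonneg fun j _ => Complex.normSq_nonneg _
  rcases eq_or_lt_of_le hpsd with hzero | hpos
  · -- c^2 = 1, K = 0, A = c • 1
    have hK0 : K = 0 := by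
      rw [← Matrix.conjTranspose_mul_self_eq_zero (A := K), hKhK, ← hzero]
      norm_num
    have hA : A = ((c : ℝ) : ℂ) • (1 : Matrix k k ℂ) := by
      have := hK0
      rw [hKdef] at this
      linear_combination (norm := module) this
    rw [hA, Matrix.det_smul, Matrix.det_one, mul_one]
    have hc2 : c = 1 ∨ c = -1 := by
      have : (c - 1) * (c + 1) = 0 := by nlinarith
      rcases mul_eq_zero.mp this with h | h
      · left; linarith
      · right; linarith
    rcases hc2 with h | h
    · rw [h]; norm_num
    · rw [h]; push_cast; exact Even.neg_one_pow h4
  · -- main case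
    set s := Real.sqrt (1 - c ^ 2) with hsdef
    have hs2 : s ^ 2 = 1 - c ^ 2 := Real.sq_sqrt hpsd
    have hs : 0 < s := Real.sqrt_pos.mpr hpos
    have hs0 : ((s : ℝ) : ℂ) ≠ 0 := by exact_mod_cast hs.ne'
    set G := (Complex.I * ((s : ℝ) : ℂ)⁻¹) • K with hGdef
    have hGh : G.IsHermitian := by
      unfold Matrix.IsHermitian
      rw [hGdef, Matrix.conjTranspose_smul, hKh]
      rw [show star (Complex.I * ((s : ℝ) : ℂ)⁻¹) = -(Complex.I * ((s : ℝ) : ℂ)⁻¹) by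
        rw [star_mul', Complex.star_def, Complex.conj_I, map_inv₀, Complex.conj_ofReal]
        ring]
      module
    have hGG : G * G = 1 := by
      rw [hGdef, Matrix.smul_mul, Matrix.mul_smul, smul_smul, hKK, smul_smul]
      have hss : ((s : ℝ) : ℂ) * ((s : ℝ) : ℂ) = ((1 - c ^ 2 : ℝ) : ℂ) := by
        push_cast [← hs2]; ring
      have h1c : ((1 - c ^ 2 : ℝ) : ℂ) ≠ 0 := by
        exact_mod_cast (show (1 - c ^ 2 : ℝ) ≠ 0 from hpos.ne')
      have key : Complex.I * ((s : ℝ) : ℂ)⁻¹ * (Complex.I * ((s : ℝ) : ℂ)⁻¹)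
          * ((c ^ 2 - 1 : ℝ) : ℂ) = 1 := by
        rw [show Complex.I * ((s : ℝ) : ℂ)⁻¹ * (Complex.I * ((s : ℝ) : ℂ)⁻¹) * ((c ^ 2 - 1 : ℝ) : ℂ)
            = (Complex.I * Complex.I) * (((s : ℝ) : ℂ) * ((s : ℝ) : ℂ))⁻¹ * ((c ^ 2 - 1 : ℝ) : ℂ)
          by rw [mul_inv]; ring]
        rw [Complex.I_mul_I, hss,
          show ((c ^ 2 - 1 : ℝ) : ℂ) = -((1 - c ^ 2 : ℝ) : ℂ) by push_cast; ring]
        field_simp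
      rw [key, one_smul]
    -- trace K = 0
    have htrK : K.trace = 0 := by
      have htr1 : K.trace = A.trace - ((c : ℝ) : ℂ) * (Fintype.card k : ℂ) := by
        rw [hKdef, Matrix.trace_sub, Matrix.trace_smul, Matrix.trace_one]
        rw [smul_eq_mul]
      have him : K.trace.im = 0 := by
        rw [htr1]
        simp [h3]
      have hre : K.trace.re = 0 := by
        have h5 : Kᴴ.trace = star K.trace := Matrix.trace_conjTranspose K
        rw [hKh, Matrix.trace_neg] at h5
        have h6 := congrArg Complex.re h5
        simp only [Complex.neg_re, Complex.star_def, Complex.conj_re] at h6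
        linarith
      exact Complex.ext hre him
    obtain ⟨hV1, hV2⟩ := Unitary.mem_iff.mp hGh.eigenvectorUnitary.2
    set Vm : Matrix k k ℂ := (hGh.eigenvectorUnitary : Matrix k k ℂ) with hVm
    set ev : k → ℝ := hGh.eigenvalues with hevdef
    set Dg : Matrix k k ℂ := Matrix.diagonal (fun i => ((ev i : ℝ) : ℂ)) with hDg
    have spec : G = Vm * Dg * star Vm := hGh.spectral_theorem
    have hdiag : star Vm * G * Vm = Dg := by
      rw [spec]
      calc star Vm * (Vm * Dg * star Vm) * Vm
          = (star Vm * Vm) * Dg * (star Vm * Vm) := by noncomm_ring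
        _ = Dg := by rw [hV1, Matrix.one_mul, Matrix.mul_one]
    have hDg2 : Dg * Dg = 1 := by
      rw [← hdiag]
      calc (star Vm * G * Vm) * (star Vm * G * Vm)
          = star Vm * (G * (Vm * star Vm) * G) * Vm := by noncomm_ring
        _ = star Vm * (G * G) * Vm := by rw [hV2, Matrix.mul_one]
        _ = 1 := by rw [hGG, Matrix.mul_one, hV1]
    have hev2 : ∀ i, ev i = 1 ∨ ev i = -1 := by
      intro i
      have h7 : (Dg * Dg) i i = (1 : Matrix k k ℂ) i i := by rw [hDg2]
      rw [hDg, Matrix.diagonal_mul_diagonal, Matrix.diagonal_apply_eq, Matrix.one_apply_eq] at h7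
      have h8 : (ev i) * (ev i) = 1 := by exact_mod_cast h7
      have h9 : (ev i - 1) * (ev i + 1) = 0 := by nlinarith
      rcases mul_eq_zero.mp h9 with h | h
      · left; linarith
      · right; linarith
    have htrG : G.trace = 0 := by
      rw [hGdef, Matrix.trace_smul, htrK, smul_zero]
    have htrDg : Dg.trace = 0 := by
      rw [← hdiag, Matrix.trace_mul_cycle, hV2, Matrix.one_mul, htrG]
    have hsum : ∑ i, ev i = 0 := by
      have h10 : Dg.trace = ((∑ i, ev i : ℝ) : ℂ) := by
        rw [hDg, Matrix.trace_diagonal]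
        push_cast
        rfl
      rw [htrDg] at h10
      exact_mod_cast h10.symm
    set mu : ℂ := -(Complex.I) * ((s : ℝ) : ℂ) with hmu
    have hKG : K = mu • G := by
      rw [hGdef, smul_smul, hmu]
      rw [show -Complex.I * ((s : ℝ) : ℂ) * (Complex.I * ((s : ℝ) : ℂ)⁻¹)
          = -(Complex.I * Complex.I) * (((s : ℝ) : ℂ) * ((s : ℝ) : ℂ)⁻¹) by ring]
      rw [Complex.I_mul_I, mul_inv_cancel₀ hs0]
      norm_num
    have hA2 : A = ((c : ℝ) : ℂ) • (1 : Matrix k k ℂ) + mu • G := by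
      rw [← hKG, hKdef]
      module
    have hA3 : A = Vm * (((c : ℝ) : ℂ) • (1 : Matrix k k ℂ) + mu • Dg) * star Vm := by
      have e1 : Vm * (((c : ℝ) : ℂ) • (1 : Matrix k k ℂ) + mu • Dg) * star Vm
          = ((c : ℝ) : ℂ) • (Vm * 1 * star Vm) + mu • (Vm * Dg * star Vm) := by
        rw [Matrix.mul_add, Matrix.add_mul, Matrix.mul_smul, Matrix.smul_mul,
          Matrix.mul_smul, Matrix.smul_mul]
      rw [e1, Matrix.mul_one, hV2, ← spec, hA2]
    have hdet1 : A.det = (((c : ℝ) : ℂ) • (1 : Matrix k k ℂ) + mu • Dg).det := by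
      rw [hA3]
      calc (Vm * (((c : ℝ) : ℂ) • (1 : Matrix k k ℂ) + mu • Dg) * star Vm).det
          = Vm.det * (((c : ℝ) : ℂ) • (1 : Matrix k k ℂ) + mu • Dg).det * (star Vm).det := by
            rw [Matrix.det_mul, Matrix.det_mul]
        _ = (((c : ℝ) : ℂ) • (1 : Matrix k k ℂ) + mu • Dg).det * (Vm.det * (star Vm).det) := by
            ring
        _ = (((c : ℝ) : ℂ) • (1 : Matrix k k ℂ) + mu • Dg).det := by
            rw [← Matrix.det_mul, hV2, Matrix.det_one, mul_one]
    have hinner : ((c : ℝ) : ℂ) • (1 : Matrix k k ℂ) + mu • Dg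
        = Matrix.diagonal (fun i => ((c : ℝ) : ℂ) + mu * ((ev i : ℝ) : ℂ)) := by
      rw [hDg]
      ext i j
      by_cases h : i = j
      · subst h
        simp [Matrix.diagonal_apply_eq, Matrix.one_apply_eq]
      · simp [Matrix.diagonal_apply_ne _ h, Matrix.one_apply_ne h]
    rw [hdet1, hinner, Matrix.det_diagonal]
    set t := Finset.univ.filter (fun i => ev i = 1) with ht
    have hsplit := Finset.prod_filter_mul_prod_filter_not Finset.univ (fun i => ev i = 1)
      (fun i => ((c : ℝ) : ℂ) + mu * ((ev i : ℝ) : ℂ))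
    rw [← hsplit]
    have e1 : ∏ i ∈ t, (((c : ℝ) : ℂ) + mu * ((ev i : ℝ) : ℂ)) = (((c : ℝ) : ℂ) + mu) ^ t.card := by
      rw [← Finset.prod_const]
      apply Finset.prod_congr rfl
      intro i hi
      rw [Finset.mem_filter] at hi
      rw [hi.2]
      norm_num
    have e2 : ∏ i ∈ Finset.univ.filter (fun i => ¬(ev i = 1)), (((c : ℝ) : ℂ) + mu * ((ev i : ℝ) : ℂ))
        = (((c : ℝ) : ℂ) - mu) ^ (Finset.univ.filter (fun i => ¬(ev i = 1))).card := by
      rw [← Finset.prod_const]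
      apply Finset.prod_congr rfl
      intro i hi
      rw [Finset.mem_filter] at hi
      rcases hev2 i with h | h
      · exact absurd h hi.2
      · rw [h]
        push_cast
        ring
    have hcards : t.card = (Finset.univ.filter (fun i => ¬(ev i = 1))).card := by
      have hsum2 : ∑ i, ev i = (t.card : ℝ) - ((Finset.univ.filter (fun i => ¬(ev i = 1))).card : ℝ) := by
        rw [← Finset.sum_filter_add_sum_filter_not Finset.univ (fun i => ev i = 1)]
        have f1 : ∑ i ∈ t, ev i = (t.card : ℝ) := by
          rw [Finset.sum_congr rfl (fun i hi => (Finset.mem_filter.mp hi).2), Finset.sum_const,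
            nsmul_eq_mul, mul_one]
        have f2 : ∑ i ∈ Finset.univ.filter (fun i => ¬(ev i = 1)), ev i
            = -((Finset.univ.filter (fun i => ¬(ev i = 1))).card : ℝ) := by
          rw [Finset.sum_congr rfl (fun i hi => by
            rcases hev2 i with h | h
            · exact absurd h (Finset.mem_filter.mp hi).2
            · exact h), Finset.sum_const, nsmul_eq_mul, mul_neg_one]
        rw [f1, f2]
        ring
      rw [hsum] at hsum2
      have : (t.card : ℝ) = ((Finset.univ.filter (fun i => ¬(ev i = 1))).card : ℝ) := by linarith
      exact_mod_cast this
    rw [e1, e2, ← hcards, ← mul_pow]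
    have hfin : (((c : ℝ) : ℂ) + mu) * (((c : ℝ) : ℂ) - mu) = 1 := by
      have : (((c : ℝ) : ℂ) + mu) * (((c : ℝ) : ℂ) - mu) = ((c : ℝ) : ℂ) ^ 2 - mu ^ 2 := by ring
      rw [this, hmu]
      rw [show (-Complex.I * ((s : ℝ) : ℂ)) ^ 2 = (Complex.I * Complex.I) * ((s : ℝ) : ℂ) ^ 2 by
        ring]
      rw [Complex.I_mul_I]
      have : (((c : ℝ) : ℂ)) ^ 2 + ((s : ℝ) : ℂ) ^ 2 = 1 := by
        push_cast [← Complex.ofReal_pow]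
        rw [show ((s ^ 2 : ℝ) : ℂ) = ((1 - c ^ 2 : ℝ) : ℂ) from by rw [hs2]]
        push_cast
        ring
      linear_combination this
    rw [hfin, one_pow]


noncomputable def conjByUnitary {n : Type*} [Fintype n] [DecidableEq n] (V : Matrix n n ℂ)
    (h1 : star V * V = 1) (h2 : V * star V = 1) :
    Matrix n n ℂ →ₐ[ℝ] Matrix n n ℂ where
  toFun M := V * M * star V
  map_one' := by
    show V * 1 * star V = 1
    rw [Matrix.mul_one, h2]
  map_mul' M N := by
    show V * (M * N) * star V = (V * M * star V) * (V * N * star V)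
    have e : (V * M * star V) * (V * N * star V) = V * M * (star V * V) * N * star V := by
      noncomm_ring
    rw [e, h1, Matrix.mul_one]
    noncomm_ring
  map_zero' := by simp
  map_add' M N := by
    show V * (M + N) * star V = V * M * star V + V * N * star V
    rw [Matrix.mul_add, Matrix.add_mul]
  commutes' r := by
    show V * (algebraMap ℝ (Matrix n n ℂ) r) * star V = algebraMap ℝ (Matrix n n ℂ) r
    rw [Algebra.algebraMap_eq_smul_one, Matrix.mul_smul, Matrix.smul_mul, Matrix.mul_one, h2]

lemma conjByUnitary_apply {n : Type*} [Fintype n] [DecidableEq n] (V : Matrix n n ℂ)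
    (h1 : star V * V = 1) (h2 : V * star V = 1) (M : Matrix n n ℂ) :
    conjByUnitary V h1 h2 M = V * M * star V := rfl

/-- quaternion-type matrices form an ℝ-subalgebra -/
noncomputable def qtSubalgebra (m : ℕ) : Subalgebra ℝ (Matrix (Fin m ⊕ Fin m) (Fin m ⊕ Fin m) ℂ) where
  carrier := {M | QT M}
  mul_mem' := fun h1 h2 => h1.mul h2
  add_mem' := fun h1 h2 => h1.add h2
  algebraMap_mem' := fun r => by
    show QT (algebraMap ℝ (Matrix (Fin m ⊕ Fin m) (Fin m ⊕ Fin m) ℂ) r)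
    have e : (algebraMap ℝ (Matrix (Fin m ⊕ Fin m) (Fin m ⊕ Fin m) ℂ)) r
        = ((r : ℝ) : ℂ) • (1 : Matrix (Fin m ⊕ Fin m) (Fin m ⊕ Fin m) ℂ) := by
      rw [Algebra.algebraMap_eq_smul_one]
      ext i j
      simp [Matrix.smul_apply, Complex.real_smul]
    rw [e]
    exact QT.smul r QT.one

lemma QT.aeval {Xm : Matrix (Fin m ⊕ Fin m) (Fin m ⊕ Fin m) ℂ} (hXm : QT Xm)
    (f : Polynomial ℝ) : QT (Polynomial.aeval Xm f) := by
  have hx : Xm ∈ qtSubalgebra m := hXm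
  have e : Polynomial.aeval Xm f
      = (qtSubalgebra m).val (Polynomial.aeval (⟨Xm, hx⟩ : qtSubalgebra m) f) := by
    rw [← Polynomial.aeval_algHom_apply]
    rfl
  rw [e]
  exact (Polynomial.aeval (⟨Xm, hx⟩ : qtSubalgebra m) f).2

lemma toSquareBlock_mul {n : Type*} [Fintype n] [DecidableEq n] (b : n → ℝ) (c : ℝ)
    (M N : Matrix n n ℂ) (hM : ∀ i j, b i ≠ b j → M i j = 0) :
    (M * N).toSquareBlock b c = M.toSquareBlock b c * N.toSquareBlock b c := by
  ext i j
  rw [Matrix.toSquareBlock_def]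
  show (M * N) i.1 j.1 = _
  rw [Matrix.mul_apply, Matrix.mul_apply]
  have e1 : ∑ x : {a // b a = c}, M.toSquareBlock b c i x * N.toSquareBlock b c x j
      = ∑ x : {a // b a = c}, M i.1 x.1 * N x.1 j.1 := rfl
  rw [e1]
  rw [← Finset.sum_subtype (Finset.univ.filter (fun x => b x = c))
    (fun x => by simp) (fun x => M i.1 x * N x j.1)]
  symm
  apply Finset.sum_subset (Finset.subset_univ _)
  intro x _ hx
  rw [Finset.mem_filter] at hx
  push_neg at hx
  have hbx : b x ≠ c := hx (Finset.mem_univ x)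
  rw [hM i.1 x (by rw [i.2]; exact fun hh => hbx hh.symm), zero_mul]

lemma toSquareBlock_conjTranspose {n : Type*} [DecidableEq n] (b : n → ℝ) (c : ℝ)
    (M : Matrix n n ℂ) : (Mᴴ).toSquareBlock b c = (M.toSquareBlock b c)ᴴ := by
  ext i j
  rfl

lemma toSquareBlock_trace {n : Type*} [Fintype n] [DecidableEq n] (b : n → ℝ) (c : ℝ)
    (M : Matrix n n ℂ) :
    (M.toSquareBlock b c).trace = ∑ i ∈ Finset.univ.filter (fun i => b i = c), M i i := by
  rw [Matrix.trace]
  show (∑ i : {a // b a = c}, M i.1 i.1) = _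
  rw [← Finset.sum_subtype (Finset.univ.filter (fun x => b x = c))
    (fun x => by simp) (fun x => M x x)]

/-- determinant of a quaternion-type unitary matrix is 1 -/
lemma det_one_of_QT_unitary {U : Matrix (Fin m ⊕ Fin m) (Fin m ⊕ Fin m) ℂ}
    (hU : QT U) (hUu : Uᴴ * U = 1) : U.det = 1 := by
  classical
  have hUu' : U * Uᴴ = 1 := mul_eq_one_comm.mp hUu
  set X := ((1/2 : ℝ) : ℂ) • (U + Uᴴ) with hX
  have hXH : X.IsHermitian := by
    unfold Matrix.IsHermitian
    rw [hX, Matrix.conjTranspose_smul, Matrix.conjTranspose_add,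
      Matrix.conjTranspose_conjTranspose]
    rw [show star (((1/2 : ℝ) : ℂ)) = (((1/2 : ℝ) : ℂ)) from by
      rw [Complex.star_def, Complex.conj_ofReal]]
    rw [add_comm]
  have hXqt : QT X := QT.smul _ (hU.add hU.conjTranspose)
  have hU2X : U + Uᴴ = (2 : ℂ) • X := by
    rw [hX, smul_smul]
    norm_num
  obtain ⟨hV1, hV2⟩ := Unitary.mem_iff.mp hXH.eigenvectorUnitary.2
  set Vm := (hXH.eigenvectorUnitary : Matrix (Fin m ⊕ Fin m) (Fin m ⊕ Fin m) ℂ) with hVm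
  set b : (Fin m ⊕ Fin m) → ℝ := hXH.eigenvalues with hb
  set D : Matrix (Fin m ⊕ Fin m) (Fin m ⊕ Fin m) ℂ
    := Matrix.diagonal (fun i => ((b i : ℝ) : ℂ)) with hD
  have spec : X = Vm * D * star Vm := hXH.spectral_theorem
  set U' := star Vm * U * Vm with hU'
  have hXD : star Vm * X * Vm = D := by
    rw [spec]
    calc star Vm * (Vm * D * star Vm) * Vm
        = (star Vm * Vm) * D * (star Vm * Vm) := by noncomm_ring
      _ = D := by rw [hV1, Matrix.one_mul, Matrix.mul_one]
  have hcomm : U * X = X * U := by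
    rw [hX, Matrix.mul_smul, Matrix.smul_mul, Matrix.mul_add, Matrix.add_mul, hUu', hUu]
  have hU'D : U' * D = D * U' := by
    rw [← hXD, hU']
    calc (star Vm * U * Vm) * (star Vm * X * Vm)
        = star Vm * (U * (Vm * star Vm) * X) * Vm := by noncomm_ring
      _ = star Vm * (U * X) * Vm := by rw [hV2, Matrix.mul_one]
      _ = star Vm * (X * U) * Vm := by rw [hcomm]
      _ = star Vm * (X * (Vm * star Vm) * U) * Vm := by rw [hV2, Matrix.mul_one]
      _ = (star Vm * X * Vm) * (star Vm * U * Vm) := by noncomm_ring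
  have hbd : ∀ i j, b i ≠ b j → U' i j = 0 := by
    intro i j hne
    have h : (U' * D) i j = (D * U') i j := by rw [hU'D]
    rw [hD, Matrix.mul_diagonal, Matrix.diagonal_mul] at h
    have hsub : U' i j * (((b j : ℝ) : ℂ) - ((b i : ℝ) : ℂ)) = 0 := by linear_combination h
    rcases mul_eq_zero.mp hsub with h0 | h0
    · exact h0
    · exfalso
      have : ((b j : ℝ) : ℂ) = ((b i : ℝ) : ℂ) := sub_eq_zero.mp h0
      exact hne (by exact_mod_cast this.symm)
  have hdVm : IsUnit Vm.det ∧ IsUnit (star Vm).det := by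
    have e : (star Vm).det * Vm.det = 1 := by rw [← Matrix.det_mul, hV1, Matrix.det_one]
    exact ⟨IsUnit.of_mul_eq_one _ (by rw [mul_comm] at e; exact e),
      IsUnit.of_mul_eq_one _ e⟩
  have hdetU : U.det = U'.det := by
    rw [hU', Matrix.det_mul, Matrix.det_mul]
    have e : (star Vm).det * U.det * Vm.det = U.det * ((star Vm).det * Vm.det) := by ring
    rw [e, ← Matrix.det_mul, hV1, Matrix.det_one, mul_one]
  have hBT : U'.BlockTriangular b := fun i j hji => hbd i j (ne_of_gt hji)
  rw [hdetU, hBT.det]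
  apply Finset.prod_eq_one
  intro c hc
  set A := U'.toSquareBlock b c with hA
  have htsbD : D.toSquareBlock b c = ((c : ℝ) : ℂ) • 1 := by
    ext i j
    by_cases h : i = j
    · subst h
      show D i.1 i.1 = _
      rw [hD, Matrix.diagonal_apply_eq, Matrix.smul_apply, Matrix.one_apply_eq, smul_eq_mul,
        mul_one, i.2]
    · have hval : i.1 ≠ j.1 := fun hv => h (Subtype.ext hv)
      show D i.1 j.1 = _
      rw [hD, Matrix.diagonal_apply_ne _ hval, Matrix.smul_apply, Matrix.one_apply_ne h,
        smul_zero]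
  have hts1 : (1 : Matrix (Fin m ⊕ Fin m) (Fin m ⊕ Fin m) ℂ).toSquareBlock b c = 1 := by
    ext i j
    by_cases h : i = j
    · subst h
      show (1 : Matrix (Fin m ⊕ Fin m) (Fin m ⊕ Fin m) ℂ) i.1 i.1 = _
      rw [Matrix.one_apply_eq, Matrix.one_apply_eq]
    · have hval : i.1 ≠ j.1 := fun hv => h (Subtype.ext hv)
      show (1 : Matrix (Fin m ⊕ Fin m) (Fin m ⊕ Fin m) ℂ) i.1 j.1 = _
      rw [Matrix.one_apply_ne hval, Matrix.one_apply_ne h]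
  have hU'conj : U'ᴴ = star Vm * Uᴴ * Vm := by
    rw [hU']
    simp only [Matrix.conjTranspose_mul, Matrix.star_eq_conjTranspose,
      Matrix.conjTranspose_conjTranspose, Matrix.mul_assoc]
  have hU'H : U'ᴴ = (2 : ℂ) • D - U' := by
    have e2 : Uᴴ = (2 : ℂ) • X - U := by
      linear_combination (norm := module) hU2X
    rw [hU'conj, e2, Matrix.mul_sub, Matrix.sub_mul, Matrix.mul_smul, Matrix.smul_mul, hXD, hU']
  have h1A : Aᴴ = ((2 * c : ℝ) : ℂ) • (1 : Matrix {a // b a = c} {a // b a = c} ℂ) - A := by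
    rw [hA, ← toSquareBlock_conjTranspose, hU'H]
    have e5 : ((2 : ℂ) • D - U').toSquareBlock b c
        = (2 : ℂ) • (D.toSquareBlock b c) - U'.toSquareBlock b c := by
      ext i j
      show ((2 : ℂ) • D - U') i.1 j.1 = _
      rw [Matrix.sub_apply, Matrix.smul_apply]
      rfl
    rw [e5, htsbD, smul_smul]
    push_cast
    rfl
  have h2A : A * A - ((2 * c : ℝ) : ℂ) • A + 1 = 0 := by
    have hUU'H : U' * U'ᴴ = 1 := by
      rw [hU'conj, hU']
      calc (star Vm * U * Vm) * (star Vm * Uᴴ * Vm)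
          = star Vm * (U * (Vm * star Vm) * Uᴴ) * Vm := by noncomm_ring
        _ = star Vm * (U * Uᴴ) * Vm := by rw [hV2, Matrix.mul_one]
        _ = 1 := by rw [hUu', Matrix.mul_one, hV1]
    have g1 : (2 : ℂ) • (U' * D) - U' * U' = 1 := by
      have g0 : U' * ((2 : ℂ) • D - U') = 1 := by rw [← hU'H, hUU'H]
      rw [Matrix.mul_sub, Matrix.mul_smul] at g0
      exact g0
    have e4 := congrArg (fun M : Matrix (Fin m ⊕ Fin m) (Fin m ⊕ Fin m) ℂ =>
      M.toSquareBlock b c) g1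
    have e5 : ((2 : ℂ) • (U' * D) - U' * U').toSquareBlock b c
        = (2 : ℂ) • ((U' * D).toSquareBlock b c) - (U' * U').toSquareBlock b c := by
      ext i j
      show ((2 : ℂ) • (U' * D) - U' * U') i.1 j.1 = _
      rw [Matrix.sub_apply, Matrix.smul_apply]
      rfl
    rw [e5, toSquareBlock_mul b c U' D hbd, toSquareBlock_mul b c U' U' hbd, htsbD, hts1] at e4
    have e6 : U'.toSquareBlock b c * (((c : ℝ) : ℂ) • 1) = ((c : ℝ) : ℂ) • A := by
      rw [Matrix.mul_smul, Matrix.mul_one, hA]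
    rw [e6] at e4
    have e7 : ((2 * c : ℝ) : ℂ) • A = (2 : ℂ) • ((c : ℝ) : ℂ) • A := by
      rw [smul_smul]
      push_cast
      ring_nf
    rw [e7]
    rw [hA] at e4 ⊢
    linear_combination (norm := module) -e4
  have h3A : (A.trace).im = 0 := by
    set Ec : Matrix (Fin m ⊕ Fin m) (Fin m ⊕ Fin m) ℂ
      := Matrix.diagonal (fun i => if b i = c then (1 : ℂ) else 0) with hEc
    have hFqt : QT (Vm * Ec * star Vm) := by
      set f : Polynomial ℝ := Lagrange.interpolate (Finset.univ.image b) id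
        (fun x => if x = c then 1 else 0) with hf
      have hpsiD : (conjByUnitary Vm hV1 hV2) D = X := by
        rw [conjByUnitary_apply, ← spec]
      have e1 : Polynomial.aeval X f = (conjByUnitary Vm hV1 hV2) (Polynomial.aeval D f) := by
        rw [← hpsiD, Polynomial.aeval_algHom_apply]
      have e3 : (Polynomial.aeval (fun i => ((b i : ℝ) : ℂ)) f : (Fin m ⊕ Fin m) → ℂ)
          = fun i => if b i = c then 1 else 0 := by
        funext i
        have e4 : (Polynomial.aeval (fun i => ((b i : ℝ) : ℂ)) f : (Fin m ⊕ Fin m) → ℂ) i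
            = Polynomial.aeval ((b i : ℝ) : ℂ) f :=
          (Polynomial.aeval_algHom_apply (Pi.evalAlgHom ℝ (fun _ => ℂ) i) _ f).symm
        rw [e4]
        rw [show ((b i : ℝ) : ℂ) = algebraMap ℝ ℂ (b i) from rfl,
          Polynomial.aeval_algebraMap_apply]
        rw [show (Polynomial.aeval (b i) f) = f.eval (b i) from rfl]
        have node := Lagrange.eval_interpolate_at_node (s := Finset.univ.image b) (v := id)
          (i := b i) (fun x => if x = c then (1 : ℝ) else 0) (Set.injOn_id _)
          (Finset.mem_image_of_mem b (Finset.mem_univ i))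
        simp only [id] at node
        rw [hf, node]
        split <;> simp
      have e2 : Polynomial.aeval D f = Ec := by
        have hDform : D = Matrix.diagonalAlgHom (R := ℝ) (fun i => ((b i : ℝ) : ℂ)) := by
          rw [hD]
          rfl
        have e2b := Polynomial.aeval_algHom_apply ((Matrix.diagonalAlgHom ℝ) :
          ((Fin m ⊕ Fin m) → ℂ) →ₐ[ℝ] Matrix (Fin m ⊕ Fin m) (Fin m ⊕ Fin m) ℂ)
          (fun i => ((b i : ℝ) : ℂ)) f
        rw [hDform, e2b, e3]
        rfl
      have haev : Polynomial.aeval X f = Vm * Ec * star Vm := by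
        rw [e1, e2, conjByUnitary_apply]
      rw [← haev]
      exact hXqt.aeval f
    have htr : A.trace = (U * (Vm * Ec * star Vm)).trace := by
      rw [hA, toSquareBlock_trace]
      have t1 : (U * (Vm * Ec * star Vm)) = (U * Vm) * Ec * star Vm := by noncomm_ring
      rw [t1, Matrix.trace_mul_cycle (U * Vm) Ec (star Vm)]
      have t2 : star Vm * (U * Vm) * Ec = U' * Ec := by rw [hU']; noncomm_ring
      rw [t2]
      have t3 : ∀ i, (U' * Ec).diag i = if b i = c then U' i i else 0 := by
        intro i
        show (U' * Ec) i i = _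
        rw [hEc, Matrix.mul_diagonal]
        split <;> simp
      rw [Matrix.trace, Finset.sum_congr rfl (fun i _ => t3 i)]
      exact Finset.sum_filter _ _
    rw [htr]
    exact (hU.mul hFqt).trace_im
  have h4A : Even (Fintype.card {a // b a = c}) := by
    have hqt : QT (X - ((c : ℝ) : ℂ) • 1) := hXqt.sub (QT.smul c QT.one)
    have heven := hqt.even_finrank_ker
    have hXc : X - ((c : ℝ) : ℂ) • 1 = Vm * (D - ((c : ℝ) : ℂ) • 1) * star Vm := by
      rw [Matrix.mul_sub, Matrix.sub_mul, ← spec]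
      congr 1
      rw [Matrix.mul_smul, Matrix.smul_mul, Matrix.mul_one, hV2]
    have hrank : (X - ((c : ℝ) : ℂ) • 1).rank = (D - ((c : ℝ) : ℂ) • 1).rank := by
      rw [hXc, Matrix.rank_mul_eq_left_of_isUnit_det _ _ hdVm.2,
        Matrix.rank_mul_eq_right_of_isUnit_det _ _ hdVm.1]
    have hDdiag : D - ((c : ℝ) : ℂ) • 1
        = Matrix.diagonal (fun i => ((b i : ℝ) : ℂ) - ((c : ℝ) : ℂ)) := by
      rw [hD]
      ext i j
      by_cases h : i = j
      · subst h
        rw [Matrix.sub_apply, Matrix.diagonal_apply_eq, Matrix.diagonal_apply_eq,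
          Matrix.smul_apply, Matrix.one_apply_eq, smul_eq_mul, mul_one]
      · rw [Matrix.sub_apply, Matrix.diagonal_apply_ne _ h, Matrix.diagonal_apply_ne _ h,
          Matrix.smul_apply, Matrix.one_apply_ne h, smul_zero, sub_zero]
    rw [hDdiag, Matrix.rank_diagonal] at hrank
    have hcardeq : Fintype.card {i // ((b i : ℝ) : ℂ) - ((c : ℝ) : ℂ) ≠ 0}
        = Fintype.card {i // ¬(b i = c)} := by
      apply Fintype.card_congr
      apply Equiv.subtypeEquivRight
      intro i
      constructor
      · intro h hbc
        exact h (by rw [hbc]; ring)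
      · intro h hsub
        exact h (by exact_mod_cast sub_eq_zero.mp hsub)
    have hrn := LinearMap.finrank_range_add_finrank_ker (X - ((c : ℝ) : ℂ) • 1).mulVecLin
    have hdom : Module.finrank ℂ ((Fin m ⊕ Fin m) → ℂ) = Fintype.card (Fin m ⊕ Fin m) :=
      Module.finrank_fintype_fun_eq_card ℂ
    have hrankdef : (X - ((c : ℝ) : ℂ) • 1).rank
        = Module.finrank ℂ (LinearMap.range (X - ((c : ℝ) : ℂ) • 1).mulVecLin) := rfl
    have hcompl : Fintype.card {i // ¬(b i = c)}
        = Fintype.card (Fin m ⊕ Fin m) - Fintype.card {i // b i = c} :=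
      Fintype.card_subtype_compl _
    have hle : Fintype.card {i // b i = c} ≤ Fintype.card (Fin m ⊕ Fin m) :=
      Fintype.card_subtype_le _
    have hfin : Module.finrank ℂ (LinearMap.ker (X - ((c : ℝ) : ℂ) • 1).mulVecLin)
        = Fintype.card {a // b a = c} := by
      omega
    rw [hfin] at heven
    exact heven
  exact fiber_det A c h1A h2A h3A h4A

lemma QT_of_blocks (Z W : Matrix (Fin m) (Fin m) ℂ) :
    QT (Matrix.fromBlocks Z W (-(W.map (starRingEnd ℂ))) (Z.map (starRingEnd ℂ))) := by
  have hcj : cj (Matrix.fromBlocks Z W (-(W.map (starRingEnd ℂ))) (Z.map (starRingEnd ℂ)))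
      = Matrix.fromBlocks (cj Z) (cj W) (-W) Z := by
    ext (i | i) (j | j) <;> simp [cj_apply, Matrix.map_apply]
  unfold QT Jq
  rw [hcj, Matrix.fromBlocks_multiply, Matrix.fromBlocks_multiply]
  rw [Matrix.fromBlocks_inj]
  refine ⟨?_, ?_, ?_, ?_⟩ <;>
    first
    | (show _ = _
       noncomm_ring)
    | noncomm_ring

open scoped MatrixOrder in
lemma QT.sqrtQT {Amat : Matrix (Fin m ⊕ Fin m) (Fin m ⊕ Fin m) ℂ} (hA : Amat.PosSemidef)
    (hq : QT Amat) : QT (CFC.sqrt Amat) := by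
  set B := CFC.sqrt Amat with hB
  have hBpsd : B.PosSemidef := (CFC.sqrt_nonneg Amat).posSemidef
  set C := (Jq m)ᴴ * cj B * Jq m with hC
  have hCpsd : C.PosSemidef := by
    have e : cj B = Bᵀ := by
      have e0 := cj_conjTranspose B
      rw [hBpsd.1] at e0
      exact e0
    rw [hC, e]
    exact Matrix.PosSemidef.conjTranspose_mul_mul_same hBpsd.transpose (Jq m)
  have hCsq : C ^ 2 = Amat := by
    rw [pow_two, hC]
    calc ((Jq m)ᴴ * cj B * Jq m) * ((Jq m)ᴴ * cj B * Jq m)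
        = (Jq m)ᴴ * cj B * (Jq m * (Jq m)ᴴ) * cj B * Jq m := by noncomm_ring
      _ = (Jq m)ᴴ * (cj B * cj B) * Jq m := by
          rw [Jq_mul_hermit, Matrix.mul_one]
          noncomm_ring
      _ = (Jq m)ᴴ * cj (B * B) * Jq m := by rw [cj_mul]
      _ = (Jq m)ᴴ * cj Amat * Jq m := by rw [CFC.sqrt_mul_sqrt_self Amat hA.nonneg]
      _ = (Jq m)ᴴ * (cj Amat * Jq m) := by rw [Matrix.mul_assoc]
      _ = (Jq m)ᴴ * (Jq m * Amat) := by rw [← hq]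
      _ = Amat := by rw [← Matrix.mul_assoc, Jq_hermit_mul, Matrix.one_mul]
  have hCeq : C = B := (CFC.sqrt_unique (by rw [← pow_two]; exact hCsq) hCpsd.nonneg).symm
  have h2 : Jq m * C = Jq m * B := by rw [hCeq]
  rw [hC, ← Matrix.mul_assoc, ← Matrix.mul_assoc, Jq_mul_hermit, Matrix.one_mul] at h2
  exact h2.symm

open scoped MatrixOrder in
lemma QT.det_re_nonneg {S : Matrix (Fin m ⊕ Fin m) (Fin m ⊕ Fin m) ℂ} (hS : QT S) :
    0 ≤ S.det.re := by
  by_cases h0 : S.det = 0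
  · rw [h0]
    simp
  have hpsd : (Sᴴ * S).PosSemidef := Matrix.posSemidef_conjTranspose_mul_self S
  set P := CFC.sqrt (Sᴴ * S) with hP
  have hPpsd : P.PosSemidef := (CFC.sqrt_nonneg (Sᴴ * S)).posSemidef
  have hPherm : P.IsHermitian := hPpsd.1
  have hPP : P * P = Sᴴ * S := CFC.sqrt_mul_sqrt_self _ hpsd.nonneg
  have hPqt : QT P := QT.sqrtQT hpsd ((hS.conjTranspose).mul hS)
  have hPdet : IsUnit P.det := by
    have e : P.det * P.det = (starRingEnd ℂ) S.det * S.det := by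
      rw [← Matrix.det_mul, hPP, Matrix.det_mul, Matrix.det_conjTranspose]
      rfl
    have hnz : (starRingEnd ℂ) S.det * S.det ≠ 0 :=
      mul_ne_zero (by simpa using h0) h0
    apply isUnit_iff_ne_zero.mpr
    intro hz
    rw [hz, mul_zero] at e
    exact hnz e.symm
  set Um := S * P⁻¹ with hUm
  have hUqt : QT Um := hS.mul (hPqt.inv hPdet)
  have hPinvH : (P⁻¹)ᴴ = P⁻¹ := by rw [Matrix.conjTranspose_nonsing_inv, hPherm]
  have hUu : Umᴴ * Um = 1 := by
    rw [hUm, Matrix.conjTranspose_mul, hPinvH]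
    calc P⁻¹ * Sᴴ * (S * P⁻¹) = P⁻¹ * (Sᴴ * S) * P⁻¹ := by noncomm_ring
      _ = P⁻¹ * (P * P) * P⁻¹ := by rw [hPP]
      _ = (P⁻¹ * P) * (P * P⁻¹) := by noncomm_ring
      _ = 1 := by
          rw [Matrix.nonsing_inv_mul _ hPdet, Matrix.mul_nonsing_inv _ hPdet, Matrix.one_mul]
  have hdet1 : Um.det = 1 := det_one_of_QT_unitary hUqt hUu
  have hSUP : S = Um * P := by
    rw [hUm, Matrix.mul_assoc, Matrix.nonsing_inv_mul _ hPdet, Matrix.mul_one]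
  have hdetSP : S.det = P.det := by
    rw [hSUP, Matrix.det_mul, hdet1, one_mul]
  have hdetP : P.det = ((∏ i, hPherm.eigenvalues i : ℝ) : ℂ) := by
    rw [hPherm.det_eq_prod_eigenvalues]
    push_cast
    rfl
  have hnn : (0 : ℝ) ≤ ∏ i, hPherm.eigenvalues i :=
    Finset.prod_nonneg fun i _ => hPpsd.eigenvalues_nonneg i
  rw [hdetSP, hdetP, Complex.ofReal_re]
  exact hnn

end Stmt17

/-- The determinant of a complex `2m × 2m` matrix of quaternion type
`S = [[Z, W], [-W̄, Z̄]]` is a nonnegative real number. -/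
theorem stmt_17 (m : ℕ) (hm : 1 ≤ m) (Z W : Matrix (Fin m) (Fin m) ℂ)
    (S : Matrix (Fin m ⊕ Fin m) (Fin m ⊕ Fin m) ℂ)
    (hS : S = Matrix.fromBlocks Z W (-(W.map (starRingEnd ℂ))) (Z.map (starRingEnd ℂ))) :
    S.det.im = 0 ∧ 0 ≤ S.det.re := by
  have hqt : Stmt17.QT S := by
    rw [hS]
    exact Stmt17.QT_of_blocks Z W
  exact ⟨hqt.det_im, hqt.det_re_nonneg⟩
end

section
/- Fix n ≥ 1 and let V be the n-dimensional real vector space of real polynomials of degree < n, equipped with the truncated multiplication p∘q := (p·q) mod tⁿ (discard all terms of degree ≥ n). Define the bilinear form γ on V by γ(p,q) := -Σ_{k=0}^{n-1} coeff_k(p·q), i.e. γ(p,q) = -(p∘q)(1). Then: (i) ∘ is commutative and associative with unit element the constant polynomial 1 (so V is a unital real Jordan algebra); (ii) γ is a symmetric bilinear form satisfying γ(p∘q, r) = γ(p, q∘r) for all p,q,r ∈ V; (iii) γ is nondegenerate. -/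
open Polynomial

/-- The truncated multiplication `p ∘ q = (p·q) mod tⁿ` on the space of real polynomials of
degree `< n`. -/
noncomputable def truncMul (n : ℕ) (p q : Polynomial.degreeLT ℝ n) :
    Polynomial.degreeLT ℝ n :=
  ⟨((p : ℝ[X]) * (q : ℝ[X])) %ₘ (X ^ n), by
    rw [Polynomial.mem_degreeLT]
    simpa [Polynomial.degree_X_pow] using
      Polynomial.degree_modByMonic_lt ((p : ℝ[X]) * (q : ℝ[X])) (Polynomial.monic_X_pow n)⟩

/-- The bilinear form `γ(p,q) = -Σ_{k<n} coeff_k(p·q)` on the space of real polynomials of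
degree `< n`. -/
noncomputable def truncGamma (n : ℕ) (p q : Polynomial.degreeLT ℝ n) : ℝ :=
  -∑ k ∈ Finset.range n, ((p : ℝ[X]) * (q : ℝ[X])).coeff k

lemma coeff_modX (n : ℕ) (a : ℝ[X]) {k : ℕ} (hk : k < n) :
    (a %ₘ X ^ n).coeff k = a.coeff k := by
  conv_rhs => rw [← Polynomial.modByMonic_add_div a (X ^ n)]
  rw [coeff_add, mul_comm, coeff_mul_X_pow', if_neg (by omega)]
  ring

lemma mulmod_left (n : ℕ) (a b : ℝ[X]) :
    ((a %ₘ X ^ n) * b) %ₘ X ^ n = (a * b) %ₘ X ^ n := by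
  conv_rhs => rw [← Polynomial.modByMonic_add_div a (X ^ n)]
  rw [add_mul, add_modByMonic, mul_assoc,
    (modByMonic_eq_zero_iff_dvd (monic_X_pow n)).2 (Dvd.intro _ rfl), add_zero]

lemma mulmod_right (n : ℕ) (a b : ℝ[X]) :
    (a * (b %ₘ X ^ n)) %ₘ X ^ n = (a * b) %ₘ X ^ n := by
  rw [mul_comm a, mulmod_left, mul_comm]

lemma eval_mod (n : ℕ) (hn : 1 ≤ n) (a : ℝ[X]) :
    (a %ₘ X ^ n).eval 1 = ∑ k ∈ Finset.range n, a.coeff k := by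
  have hd : (a %ₘ X ^ n).natDegree < n := by
    rcases eq_or_ne (a %ₘ X ^ n) 0 with h | h
    · simpa [h] using (by omega : 0 < n)
    · rw [Polynomial.natDegree_lt_iff_degree_lt h]
      simpa [Polynomial.degree_X_pow] using
        Polynomial.degree_modByMonic_lt a (Polynomial.monic_X_pow n)
  rw [Polynomial.eval_eq_sum_range' hd]
  exact Finset.sum_congr rfl fun k hk => by
    rw [coeff_modX n a (Finset.mem_range.1 hk), one_pow, mul_one]

/-- The truncated multiplication on polynomials of degree `< n` is commutative
and associative with unit the constant polynomial `1`, and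
`γ(p,q) = -Σ_{k<n} coeff_k(p·q) = -(p∘q)(1)` is a symmetric, bilinear, nondegenerate trace
form for it. -/
theorem stmt_18 (n : ℕ) (hn : 1 ≤ n) :
    -- (i) commutativity, associativity, and unit element
    (∀ p q : Polynomial.degreeLT ℝ n, truncMul n p q = truncMul n q p)
    ∧ (∀ p q r : Polynomial.degreeLT ℝ n,
        truncMul n (truncMul n p q) r = truncMul n p (truncMul n q r))
    ∧ (∀ p : Polynomial.degreeLT ℝ n,
        truncMul n ⟨(1 : ℝ[X]), by
          rw [Polynomial.mem_degreeLT, Polynomial.degree_one]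
          exact_mod_cast Nat.pos_of_ne_zero (by omega)⟩ p = p)
    -- `γ(p,q) = -(p∘q)(1)`
    ∧ (∀ p q : Polynomial.degreeLT ℝ n,
        truncGamma n p q = -((truncMul n p q : ℝ[X]).eval 1))
    -- (ii) `γ` is a symmetric bilinear form and a trace form
    ∧ (∀ p q : Polynomial.degreeLT ℝ n, truncGamma n p q = truncGamma n q p)
    ∧ (∀ p p' q : Polynomial.degreeLT ℝ n,
        truncGamma n (p + p') q = truncGamma n p q + truncGamma n p' q)
    ∧ (∀ (c : ℝ) (p q : Polynomial.degreeLT ℝ n),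
        truncGamma n (c • p) q = c * truncGamma n p q)
    ∧ (∀ p q r : Polynomial.degreeLT ℝ n,
        truncGamma n (truncMul n p q) r = truncGamma n p (truncMul n q r))
    -- (iii) `γ` is nondegenerate
    ∧ (∀ p : Polynomial.degreeLT ℝ n,
        (∀ q : Polynomial.degreeLT ℝ n, truncGamma n p q = 0) → p = 0) := by
  have hgam : ∀ a b : Polynomial.degreeLT ℝ n,
      truncGamma n a b = -(((a : ℝ[X]) * (b : ℝ[X])) %ₘ X ^ n).eval 1 := by
    intro a b; rw [truncGamma, eval_mod n hn]
  refine ⟨?_, ?_, ?_, ?_, ?_, ?_, ?_, ?_, ?_⟩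
  · intro p q
    apply Subtype.ext
    show ((p : ℝ[X]) * (q : ℝ[X])) %ₘ X ^ n = ((q : ℝ[X]) * (p : ℝ[X])) %ₘ X ^ n
    rw [mul_comm]
  · intro p q r
    apply Subtype.ext
    show (((p : ℝ[X]) * (q : ℝ[X]) %ₘ X ^ n) * (r : ℝ[X])) %ₘ X ^ n
        = ((p : ℝ[X]) * ((q : ℝ[X]) * (r : ℝ[X]) %ₘ X ^ n)) %ₘ X ^ n
    rw [mulmod_left, mulmod_right, mul_assoc]
  · intro p
    apply Subtype.ext
    show ((1 : ℝ[X]) * (p : ℝ[X])) %ₘ X ^ n = (p : ℝ[X])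
    rw [one_mul, Polynomial.modByMonic_eq_self_iff (monic_X_pow n)]
    simpa [Polynomial.degree_X_pow] using (Polynomial.mem_degreeLT.1 p.2)
  · intro p q
    rw [hgam]; rfl
  · intro p q
    simp [truncGamma, mul_comm]
  · intro p p' q
    simp [truncGamma, Submodule.coe_add, add_mul, coeff_add, Finset.sum_add_distrib]
    ring
  · intro c p q
    simp [truncGamma, Submodule.coe_smul, smul_mul_assoc, coeff_smul, smul_eq_mul,
      Finset.mul_sum]
  · intro p q r
    rw [hgam, hgam]
    show -((((p : ℝ[X]) * (q : ℝ[X]) %ₘ X ^ n) * (r : ℝ[X])) %ₘ X ^ n).eval 1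
        = -(((p : ℝ[X]) * ((q : ℝ[X]) * (r : ℝ[X]) %ₘ X ^ n)) %ₘ X ^ n).eval 1
    rw [mulmod_left, mulmod_right, mul_assoc]
  · intro p hp
    have hS : ∀ m, m ≤ n → ∑ k ∈ Finset.range m, (p : ℝ[X]).coeff k = 0 := by
      intro m hm
      rcases Nat.eq_zero_or_pos m with h0 | h0
      · simp [h0]
      have hj : n - m < n := by omega
      have hmem : (X ^ (n - m) : ℝ[X]) ∈ Polynomial.degreeLT ℝ n := by
        rw [Polynomial.mem_degreeLT, Polynomial.degree_X_pow]
        exact_mod_cast hj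
      have := hp ⟨X ^ (n - m), hmem⟩
      rw [truncGamma, neg_eq_zero] at this
      have hsum : ∑ k ∈ Finset.range n, ((p : ℝ[X]) * X ^ (n - m)).coeff k
          = ∑ k ∈ Finset.range m, (p : ℝ[X]).coeff k := by
        simp only [coeff_mul_X_pow']
        conv_lhs => rw [Finset.range_eq_Ico,
          ← Finset.sum_Ico_consecutive _ (Nat.zero_le (n - m)) hj.le]
        have h1 : ∑ k ∈ Finset.Ico 0 (n - m),
            (if n - m ≤ k then (p : ℝ[X]).coeff (k - (n - m)) else 0) = 0 := by
          apply Finset.sum_eq_zero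
          intro k hk
          rw [if_neg]
          exact Nat.not_le.2 (Finset.mem_Ico.1 hk).2
        rw [h1, zero_add, Finset.sum_Ico_eq_sum_range]
        have h2 : n - (n - m) = m := by omega
        rw [h2]
        apply Finset.sum_congr rfl
        intro k _
        rw [if_pos (by omega)]
        congr 1
        omega
      rw [hsum] at this
      exact this
    have hcoeff : ∀ k, (p : ℝ[X]).coeff k = 0 := by
      intro k
      rcases lt_or_ge k n with hk | hk
      · have h1 := hS (k + 1) hk
        have h2 := hS k (by omega)
        rw [Finset.sum_range_succ, h2, zero_add] at h1
        exact h1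
      · apply Polynomial.coeff_eq_zero_of_degree_lt
        exact lt_of_lt_of_le (Polynomial.mem_degreeLT.1 p.2) (by exact_mod_cast hk)
    apply Subtype.ext
    exact Polynomial.ext fun k => by simp [hcoeff k]
end

section
/- Fix n ≥ 2 and let V be the n-dimensional real vector space of real polynomials of degree < n, equipped with the truncated multiplication p∘q := (p·q) mod tⁿ. For p ∈ V let L_p : V → V be the multiplication operator q ↦ p∘q. Then trace(L_p) = n·coeff_0(p), so the bilinear form g(p,q) := trace(L_{p∘q}) equals n·coeff_0(p)·coeff_0(q) and is degenerate. Hence (V, ∘) is a unital commutative associative (in particular Jordan) real algebra which is not semi-simple (its canonical bilinear form g is degenerate), even though it carries a nondegenerate trace form, contradicting Koecher's claim that a unital Jordan algebra with a nondegenerate trace form must be semi-simple. -/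
open Polynomial

/-- The multiplication operator `L_p : q ↦ p ∘ q` as an ℝ-linear endomorphism. -/
noncomputable def truncMulOp (n : ℕ) (p : Polynomial.degreeLT ℝ n) :
    Polynomial.degreeLT ℝ n →ₗ[ℝ] Polynomial.degreeLT ℝ n where
  toFun q := truncMul n p q
  map_add' q q' := by
    apply Subtype.ext
    show ((p : ℝ[X]) * ((q + q' : Polynomial.degreeLT ℝ n) : ℝ[X])) %ₘ (X ^ n) = _
    rw [Submodule.coe_add, mul_add, Polynomial.add_modByMonic]
    rfl
  map_smul' c q := by
    apply Subtype.ext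
    show ((p : ℝ[X]) * ((c • q : Polynomial.degreeLT ℝ n) : ℝ[X])) %ₘ (X ^ n) = _
    rw [Submodule.coe_smul, mul_smul_comm, Polynomial.smul_modByMonic]
    rfl

lemma aux_coeff_X_pow_mul_eq_zero {n i : ℕ} (h : i < n) (g : ℝ[X]) :
    (X ^ n * g).coeff i = 0 := by
  rw [mul_comm, coeff_mul_X_pow', if_neg (not_le.mpr h)]

lemma aux_coeff_mod {n i : ℕ} (h : i < n) (f : ℝ[X]) :
    (f %ₘ X ^ n).coeff i = f.coeff i := by
  rw [modByMonic_eq_sub_mul_div f (X ^ n), coeff_sub,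
    aux_coeff_X_pow_mul_eq_zero h, sub_zero]

lemma aux_basis_coe (n : ℕ) (j : Fin n) :
    ((Module.Basis.ofEquivFun (degreeLTEquiv ℝ n) j : Polynomial.degreeLT ℝ n) : ℝ[X]) = X ^ (j : ℕ) := by
  classical
  rw [Module.Basis.coe_ofEquivFun]
  show ((∑ i : Fin n, monomial (i:ℕ) (Function.update (0 : Fin n → ℝ) j 1 i) : ℝ[X])) = _
  rw [Finset.sum_eq_single j]
  · simp [X_pow_eq_monomial]
  · intro i _ hij
    simp [Function.update_apply, hij]
  · simp

lemma aux_trace (n : ℕ) (p : Polynomial.degreeLT ℝ n) :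
    LinearMap.trace ℝ (Polynomial.degreeLT ℝ n) (truncMulOp n p)
      = n * ((p : ℝ[X]).coeff 0) := by
  classical
  let b : Module.Basis (Fin n) ℝ (Polynomial.degreeLT ℝ n) := Module.Basis.ofEquivFun (degreeLTEquiv ℝ n)
  rw [LinearMap.trace_eq_matrix_trace ℝ b, Matrix.trace]
  have hdiag : ∀ i : Fin n,
      (LinearMap.toMatrix b b (truncMulOp n p)).diag i = (p : ℝ[X]).coeff 0 := by
    intro i
    rw [Matrix.diag, LinearMap.toMatrix_apply, Module.Basis.ofEquivFun_repr_apply]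
    show (((p : ℝ[X]) * ((b i : Polynomial.degreeLT ℝ n) : ℝ[X])) %ₘ X ^ n).coeff (i:ℕ) = _
    rw [aux_basis_coe, aux_coeff_mod i.isLt, coeff_mul_X_pow', if_pos le_rfl, Nat.sub_self]
  rw [Finset.sum_congr rfl fun i _ => hdiag i]
  simp [mul_comm]

/-- STATEMENT 19
: On the truncated polynomial algebra of dimension `n ≥ 2`, the trace of
the multiplication operator `L_p` is `n·coeff₀(p)`, so the canonical bilinear form
`g(p,q) = trace(L_{p∘q}) = n·coeff₀(p)·coeff₀(q)` is degenerate; hence this unital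
commutative associative (in particular Jordan) algebra is not semi-simple, even though it
carries a nondegenerate trace form. -/
theorem stmt_19 (n : ℕ) (hn : 2 ≤ n) :
    -- `trace(L_p) = n·coeff₀(p)`
    (∀ p : Polynomial.degreeLT ℝ n,
      LinearMap.trace ℝ (Polynomial.degreeLT ℝ n) (truncMulOp n p)
        = n * ((p : ℝ[X]).coeff 0))
    -- hence `g(p,q) = trace(L_{p∘q}) = n·coeff₀(p)·coeff₀(q)`
    ∧ (∀ p q : Polynomial.degreeLT ℝ n,
        LinearMap.trace ℝ (Polynomial.degreeLT ℝ n) (truncMulOp n (truncMul n p q))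
          = n * ((p : ℝ[X]).coeff 0) * ((q : ℝ[X]).coeff 0))
    -- `g` is degenerate: the algebra is not semi-simple
    ∧ (∃ p : Polynomial.degreeLT ℝ n, p ≠ 0 ∧ ∀ q : Polynomial.degreeLT ℝ n,
        LinearMap.trace ℝ (Polynomial.degreeLT ℝ n) (truncMulOp n (truncMul n p q)) = 0)
    -- yet the algebra carries a nondegenerate trace form
    ∧ (∃ γ : Polynomial.degreeLT ℝ n → Polynomial.degreeLT ℝ n → ℝ,
        (∀ p q, γ p q = γ q p)
        ∧ (∀ p p' q, γ (p + p') q = γ p q + γ p' q)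
        ∧ (∀ (c : ℝ) p q, γ (c • p) q = c * γ p q)
        ∧ (∀ p q r, γ (truncMul n p q) r = γ p (truncMul n q r))
        ∧ (∀ p, (∀ q, γ p q = 0) → p = 0)) := by
  have hn0 : 0 < n := by omega
  have htr2 : ∀ p q : Polynomial.degreeLT ℝ n,
      LinearMap.trace ℝ (Polynomial.degreeLT ℝ n) (truncMulOp n (truncMul n p q))
        = n * ((p : ℝ[X]).coeff 0) * ((q : ℝ[X]).coeff 0) := by
    intro p q
    rw [aux_trace]
    show (n : ℝ) * (((p : ℝ[X]) * (q : ℝ[X])) %ₘ X ^ n).coeff 0 = _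
    rw [aux_coeff_mod hn0, mul_coeff_zero, mul_assoc]
  refine ⟨aux_trace n, htr2, ?_, ?_⟩
  · -- degeneracy: take p = X
    have hXmem : (X : ℝ[X]) ∈ Polynomial.degreeLT ℝ n := by
      rw [Polynomial.mem_degreeLT, degree_X]
      exact_mod_cast (by omega : 1 < n)
    refine ⟨⟨X, hXmem⟩, ?_, ?_⟩
    · intro h
      exact X_ne_zero (congrArg Subtype.val h)
    · intro q
      rw [htr2]
      simp [coeff_X_zero]
  · -- the nondegenerate trace form γ(p,q) = coeff_{n-1}(p·q)
    have h1 : n - 1 < n := by omega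
    refine ⟨fun p q => ((p : ℝ[X]) * (q : ℝ[X])).coeff (n - 1), ?_, ?_, ?_, ?_, ?_⟩
    · intro p q; dsimp only; rw [mul_comm]
    · intro p p' q
      dsimp only
      rw [Submodule.coe_add, add_mul, coeff_add]
    · intro c p q
      dsimp only
      rw [Submodule.coe_smul, smul_mul_assoc, coeff_smul, smul_eq_mul]
    · intro p q r
      show ((((p : ℝ[X]) * (q : ℝ[X])) %ₘ X ^ n) * (r : ℝ[X])).coeff (n - 1)
        = ((p : ℝ[X]) * (((q : ℝ[X]) * (r : ℝ[X])) %ₘ X ^ n)).coeff (n - 1)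
      rw [modByMonic_eq_sub_mul_div _ (X ^ n),
        modByMonic_eq_sub_mul_div _ (X ^ n), sub_mul, mul_sub,
        coeff_sub, coeff_sub, mul_assoc (X ^ n), aux_coeff_X_pow_mul_eq_zero h1,
        mul_left_comm (p : ℝ[X]) (X ^ n), aux_coeff_X_pow_mul_eq_zero h1,
        sub_zero, sub_zero, mul_assoc]
    · intro p hp
      apply Subtype.ext
      show (p : ℝ[X]) = 0
      ext k
      rw [coeff_zero]
      by_cases hk : k < n
      · have hmem : (X : ℝ[X]) ^ (n - 1 - k) ∈ Polynomial.degreeLT ℝ n := by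
          rw [Polynomial.mem_degreeLT, degree_X_pow]
          exact_mod_cast (by omega : n - 1 - k < n)
        have := hp ⟨X ^ (n - 1 - k), hmem⟩
        dsimp only at this
        rw [coeff_mul_X_pow', if_pos (by omega : n - 1 - k ≤ n - 1),
          (by omega : n - 1 - (n - 1 - k) = k)] at this
        exact this
      · exact coeff_eq_zero_of_degree_lt
          (lt_of_lt_of_le (Polynomial.mem_degreeLT.mp p.2)
            (by exact_mod_cast (by omega : n ≤ k)))
end
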